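/- arXiv:2302.03234 — 3 statements merged into one kernel-verified Lean document; each statement's English description precedes it below -/
import Mathlib

section
/- The element ρ_{pq} = Σ_{1≤i<j≤p} (∂/∂x_i ∧ ∂/∂x_j) ⊗ α_{ij} − Σ_{p+1≤i<j≤n} (∂/∂x_i ∧ ∂/∂x_j) ⊗ α_{ij} − Σ_{1≤i≤p, p+1≤j≤n} (∂/∂x_i ∧ ∂/∂x_j) ⊗ β_{ij} ∈ Λ²𝔍_n ⊗ 𝔥_{p,q} is so(p,q)-invariant. -/
open ExteriorAlgebra

variable {M : Type*} [AddCommGroup M] [Module ℝ M]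

/-- The multilinear map `(v₁,…,v_k) ↦ Σ_l v₁ ∧ … ∧ g(v_l) ∧ … ∧ v_k`. -/
noncomputable def leibnizMulti (g : M →ₗ[ℝ] M) (k : ℕ) :
    MultilinearMap ℝ (fun _ : Fin k => M) (ExteriorAlgebra ℝ M) :=
  ∑ l : Fin k,
    ((ιMulti ℝ k).toMultilinearMap).compLinearMap
      (fun j => if j = l then g else LinearMap.id)

theorem leibnizMulti_apply (g : M →ₗ[ℝ] M) (k : ℕ) (v : Fin k → M) :
    leibnizMulti g k v =
      ∑ l : Fin k, ιMulti ℝ k (fun j => if j = l then g (v j) else v j) := by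
  simp only [leibnizMulti, MultilinearMap.sum_apply, MultilinearMap.compLinearMap_apply]
  refine Finset.sum_congr rfl fun l _ => ?_
  exact congrArg (ιMulti ℝ k) (funext fun j => by split <;> rfl)

theorem leibnizMulti_alternating (g : M →ₗ[ℝ] M) (k : ℕ) (v : Fin k → M)
    (a b : Fin k) (hv : v a = v b) (hab : a ≠ b) : leibnizMulti g k v = 0 := by
  rw [leibnizMulti_apply]
  set f : Fin k → ExteriorAlgebra ℝ M :=
    fun l => ιMulti ℝ k (fun j => if j = l then g (v j) else v j) with hf
  have hb : b ∈ Finset.univ.erase a := Finset.mem_erase.2 ⟨Ne.symm hab, Finset.mem_univ b⟩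
  have h1 : ∀ l ∈ (Finset.univ.erase a).erase b, f l = 0 := by
    intro l hl
    have hlb : b ≠ l := Ne.symm (Finset.ne_of_mem_erase hl)
    have hla : a ≠ l := Ne.symm (Finset.ne_of_mem_erase (Finset.mem_of_mem_erase hl))
    refine AlternatingMap.map_eq_zero_of_eq _ _ ?_ hab
    simp only [if_neg hla, if_neg hlb, hv]
  have hswap : (fun j => if j = b then g (v j) else v j) =
      (fun j => if j = a then g (v j) else v j) ∘ Equiv.swap a b := by
    funext j
    rcases eq_or_ne j a with rfl | hja
    · simp only [Function.comp_apply, Equiv.swap_apply_left, if_neg hab,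
        if_neg (Ne.symm hab), hv]
    · rcases eq_or_ne j b with rfl | hjb
      · simp only [Function.comp_apply, Equiv.swap_apply_right, if_pos rfl, if_pos rfl, hv]
      · simp only [Function.comp_apply, Equiv.swap_apply_of_ne_of_ne hja hjb,
          if_neg hja, if_neg hjb]
  have hfb : f b = - f a := by
    rw [hf]
    simp only
    rw [hswap]
    exact AlternatingMap.map_swap _ _ hab
  calc ∑ l : Fin k, f l
      = ∑ l ∈ (Finset.univ.erase a), f l + f a := (Finset.sum_erase_add _ _ (Finset.mem_univ a)).symm
    _ = (∑ l ∈ (Finset.univ.erase a).erase b, f l + f b) + f a := by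
        rw [Finset.sum_erase_add _ _ hb]
    _ = (0 + f b) + f a := by rw [Finset.sum_eq_zero h1]
    _ = 0 := by rw [hfb]; abel

/-- The alternating map `(v₁,…,v_k) ↦ Σ_l v₁ ∧ … ∧ g(v_l) ∧ … ∧ v_k`. -/
noncomputable def leibnizAlt (g : M →ₗ[ℝ] M) (k : ℕ) :
    M [⋀^Fin k]→ₗ[ℝ] ExteriorAlgebra ℝ M where
  toMultilinearMap := leibnizMulti g k
  map_eq_zero_of_eq' v i j h hij := leibnizMulti_alternating g k v i j h hij

/-- The Leibniz-rule (derivation) extension of a linear map `g : M → M` to the exterior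
algebra of `M`; on `Λ^k` it is `g·(x₁∧…∧x_k) = Σ_l x₁∧…∧[g,x_l]∧…∧x_k`. -/
noncomputable def leibnizDer (g : M →ₗ[ℝ] M) :
    ExteriorAlgebra ℝ M →ₗ[ℝ] ExteriorAlgebra ℝ M :=
  liftAlternating (fun k => leibnizAlt g k)

open Matrix

/-- The diagonal matrix `I_{p,q}` with `p` entries `1` and `q` entries `-1`. -/
def Jmat (p q : ℕ) : Matrix (Fin (p + q)) (Fin (p + q)) ℝ :=
  Matrix.diagonal (fun i => if (i : ℕ) < p then (1 : ℝ) else -1)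

/-- `so(p,q)` as a set of matrices. -/
def soSet (p q : ℕ) : Set (Matrix (Fin (p + q)) (Fin (p + q)) ℝ) :=
  {X | Xᵀ * Jmat p q = -(Jmat p q * X)}

/-- The action `a ↦ [g, a] = −A a` of `g ∈ so(p,q) ⊆ 𝔥_{p,q}` on the translation ideal
`𝔍ₙ ≅ ℝⁿ` (coming from the bracket of `𝔥_{p,q}`). -/
noncomputable def adV {n : ℕ} (A : Matrix (Fin n) (Fin n) ℝ) :
    (Fin n → ℝ) →ₗ[ℝ] (Fin n → ℝ) :=
  -(Matrix.mulVecLin A)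

open TensorProduct

/-- The affine indefinite orthogonal Lie algebra `𝔥_{p,q} = ℝⁿ ⋊ so(p,q)` is modelled by
pairs `(A, v)`: the vector field `x ↦ A x + v`.  Membership in `𝔥_{p,q}` restricts the
matrix part to `so(p,q)`. -/
abbrev Hpair (n : ℕ) := Matrix (Fin n) (Fin n) ℝ × (Fin n → ℝ)

/-- The rotation `α_{ij} = xᵢ ∂/∂xⱼ − xⱼ ∂/∂xᵢ` as an element of `𝔥_{p,q}`. -/
def alphaH {n : ℕ} (i j : Fin n) : Hpair n :=
  (Matrix.single j i (1 : ℝ) - Matrix.single i j (1 : ℝ), 0)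

/-- The boost `β_{ij} = xᵢ ∂/∂xⱼ + xⱼ ∂/∂xᵢ` as an element of `𝔥_{p,q}`. -/
def betaH {n : ℕ} (i j : Fin n) : Hpair n :=
  (Matrix.single j i (1 : ℝ) + Matrix.single i j (1 : ℝ), 0)

/-- The translation `∂/∂xᵢ` as an element of `𝔥_{p,q}`. -/
def ddH {n : ℕ} (i : Fin n) : Hpair n := (0, (Pi.single i (1 : ℝ) : Fin n → ℝ))

/-- The adjoint action `h ↦ [g, h]` of `g = (A, 0) ∈ so(p,q) ⊆ 𝔥_{p,q}` on `𝔥_{p,q}`: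
`[(A,0), (B,w)] = (BA − AB, −A w)`. -/
noncomputable def adH {n : ℕ} (A : Matrix (Fin n) (Fin n) ℝ) : Hpair n →ₗ[ℝ] Hpair n :=
  ((LinearMap.mulRight ℝ A - LinearMap.mulLeft ℝ A).comp (LinearMap.fst ℝ _ _)).prod
    ((-(Matrix.mulVecLin A)).comp (LinearMap.snd ℝ _ _))

/-- The diagonal action of `g ∈ so(p,q)` on `Λ^*𝔍ₙ ⊗ 𝔥_{p,q}`:
`g · (w ⊗ h) = [g,w] ⊗ h + w ⊗ [g,h]`, the bracket being extended to wedges by the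
Leibniz rule. -/
noncomputable def actEH {n : ℕ} (A : Matrix (Fin n) (Fin n) ℝ) :
    (ExteriorAlgebra ℝ (Fin n → ℝ) ⊗[ℝ] Hpair n) →ₗ[ℝ]
      (ExteriorAlgebra ℝ (Fin n → ℝ) ⊗[ℝ] Hpair n) :=
  TensorProduct.map (leibnizDer (adV A)) LinearMap.id +
    TensorProduct.map LinearMap.id (adH A)

/-- The wedge `∂/∂x_{i₁} ∧ … ∧ ∂/∂x_{i_k}` of standard basis vectors. -/
noncomputable def basisWedge {n : ℕ} (k : ℕ) (f : Fin k → Fin n) :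
    ExteriorAlgebra ℝ (Fin n → ℝ) :=
  ExteriorAlgebra.ιMulti ℝ k (fun t => (Pi.single (f t) (1 : ℝ) : Fin n → ℝ))

/-- `ρ_{pq} = Σ_{i<j≤p} (∂ᵢ∧∂ⱼ)⊗α_{ij} − Σ_{p<i<j} (∂ᵢ∧∂ⱼ)⊗α_{ij}
− Σ_{i≤p<j} (∂ᵢ∧∂ⱼ)⊗β_{ij} ∈ Λ²𝔍ₙ ⊗ 𝔥_{p,q}` (0-based indices). -/
noncomputable def rhoPQ (p q : ℕ) :
    ExteriorAlgebra ℝ (Fin (p + q) → ℝ) ⊗[ℝ] Hpair (p + q) :=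
  (∑ i : Fin (p + q), ∑ j : Fin (p + q),
      if (i : ℕ) < (j : ℕ) ∧ (j : ℕ) < p then
        basisWedge 2 ![i, j] ⊗ₜ[ℝ] alphaH i j else 0)
  - (∑ i : Fin (p + q), ∑ j : Fin (p + q),
      if (i : ℕ) < (j : ℕ) ∧ p ≤ (i : ℕ) then
        basisWedge 2 ![i, j] ⊗ₜ[ℝ] alphaH i j else 0)
  - (∑ i : Fin (p + q), ∑ j : Fin (p + q),
      if (i : ℕ) < p ∧ p ≤ (j : ℕ) then
        basisWedge 2 ![i, j] ⊗ₜ[ℝ] betaH i j else 0)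

/-! ### Auxiliary definitions and lemmas -/

theorem ιMulti_two {M : Type*} [AddCommGroup M] [Module ℝ M] (x y : M) :
    ιMulti ℝ 2 ![x, y] = ι ℝ x * ι ℝ y := by
  simp [ExteriorAlgebra.ιMulti_apply, List.ofFn_succ]

theorem leibnizDer_mul_ι {M : Type*} [AddCommGroup M] [Module ℝ M] (g : M →ₗ[ℝ] M)
    (u v : M) :
    leibnizDer g (ι ℝ u * ι ℝ v) = ι ℝ (g u) * ι ℝ v + ι ℝ u * ι ℝ (g v) := by
  rw [← ιMulti_two, leibnizDer, liftAlternating_apply_ιMulti]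
  show leibnizMulti g 2 ![u, v] = _
  rw [leibnizMulti_apply, Fin.sum_univ_two]
  congr 1
  · have h : (fun j => if j = (0 : Fin 2) then g (![u, v] j) else ![u, v] j) = ![g u, v] := by
      funext j; fin_cases j <;> simp
    rw [h, ιMulti_two]
  · have h : (fun j => if j = (1 : Fin 2) then g (![u, v] j) else ![u, v] j) = ![u, g v] := by
      funext j; fin_cases j <;> simp
    rw [h, ιMulti_two]

/-- Sign `ε_j`. -/
def epsSgn (p : ℕ) {n : ℕ} (j : Fin n) : ℝ := if (j : ℕ) < p then 1 else -1

/-- Wedge of two standard basis vectors. -/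
noncomputable def Wd {n : ℕ} (i j : Fin n) : ExteriorAlgebra ℝ (Fin n → ℝ) :=
  ι ℝ (Pi.single i 1 : Fin n → ℝ) * ι ℝ (Pi.single j 1 : Fin n → ℝ)

/-- Matrix unit as an element of `Hpair`. -/
def Em {n : ℕ} (a b : Fin n) : Hpair n :=
  (Matrix.single a b (1 : ℝ), 0)

theorem basisWedge_two {n : ℕ} (i j : Fin n) : basisWedge 2 ![i, j] = Wd i j := by
  rw [basisWedge, Wd, ← ιMulti_two]
  congr 1
  funext t; fin_cases t <;> simp

theorem Wd_swap {n : ℕ} (i j : Fin n) : Wd j i = -Wd i j := by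
  have h := ExteriorAlgebra.ι_add_mul_swap (R := ℝ)
    (Pi.single i 1 : Fin n → ℝ) (Pi.single j 1)
  rw [Wd, Wd]
  linear_combination (norm := module) h

theorem Wd_diag {n : ℕ} (i : Fin n) : Wd i i = 0 := by
  rw [Wd]; exact ExteriorAlgebra.ι_sq_zero _

theorem mulVec_single_sum {n : ℕ} (A : Matrix (Fin n) (Fin n) ℝ) (i : Fin n) :
    A *ᵥ (Pi.single i 1 : Fin n → ℝ) = ∑ k, A k i • (Pi.single k 1 : Fin n → ℝ) := by
  funext m
  simp [Matrix.mulVec_single, Pi.single_apply, Finset.sum_apply]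

theorem ι_adV {n : ℕ} (A : Matrix (Fin n) (Fin n) ℝ) (m : Fin n) :
    ι ℝ (adV A (Pi.single m 1 : Fin n → ℝ)) =
      ∑ k, (-(A k m)) • ι ℝ (Pi.single k 1 : Fin n → ℝ) := by
  have h : adV A (Pi.single m 1 : Fin n → ℝ) =
      ∑ k, (-(A k m)) • (Pi.single k 1 : Fin n → ℝ) := by
    rw [adV, LinearMap.neg_apply, Matrix.mulVecLin_apply, mulVec_single_sum]
    simp [neg_smul, Finset.sum_neg_distrib]
  rw [h, map_sum]
  simp

theorem leibnizDer_Wd {n : ℕ} (A : Matrix (Fin n) (Fin n) ℝ) (i j : Fin n) :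
    leibnizDer (adV A) (Wd i j) =
      ∑ k, (-(A k i)) • Wd k j + ∑ k, (-(A k j)) • Wd i k := by
  rw [Wd, leibnizDer_mul_ι, ι_adV, ι_adV]
  simp [Finset.sum_mul, Finset.mul_sum, smul_mul_assoc, mul_smul_comm, Wd]

theorem stdBasis_mul {n : ℕ} (A : Matrix (Fin n) (Fin n) ℝ) (j i : Fin n) :
    Matrix.single j i (1 : ℝ) * A = ∑ k, A i k • Matrix.single j k 1 := by
  ext a b
  simp only [Matrix.mul_apply, Matrix.single, Matrix.of_apply, Finset.sum_apply,
    Matrix.smul_apply, smul_eq_mul, ite_and, mul_ite, mul_one, mul_zero, ite_mul, one_mul,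
    zero_mul]
  by_cases ha : a = j <;> simp [Matrix.sum_apply, ha, Finset.sum_ite_eq, Finset.sum_ite_eq']

theorem mul_stdBasis {n : ℕ} (A : Matrix (Fin n) (Fin n) ℝ) (j i : Fin n) :
    A * Matrix.single j i (1 : ℝ) = ∑ k, A k j • Matrix.single k i 1 := by
  ext a b
  simp only [Matrix.mul_apply, Matrix.single, Matrix.of_apply, Finset.sum_apply,
    Matrix.smul_apply, smul_eq_mul, ite_and, mul_ite, mul_one, mul_zero, ite_mul, one_mul,
    zero_mul]
  by_cases hb : b = i <;> simp [Matrix.sum_apply, hb, Finset.sum_ite_eq, Finset.sum_ite_eq']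

theorem adH_Em {n : ℕ} (A : Matrix (Fin n) (Fin n) ℝ) (j i : Fin n) :
    adH A (Em j i) = ∑ k, A i k • Em j k + ∑ k, (-(A k j)) • Em k i := by
  have h1 : (adH A (Em j i)).1 = (∑ k, A i k • Em j k + ∑ k, (-(A k j)) • Em k i).1 := by
    simp only [adH, Em, LinearMap.prod_apply, Function.prod, LinearMap.coe_comp, Function.comp_apply,
      LinearMap.fst_apply, LinearMap.sub_apply, LinearMap.mulRight_apply, LinearMap.mulLeft_apply,
      Prod.fst_add, Prod.fst_sum, Prod.smul_fst]
    rw [stdBasis_mul, mul_stdBasis]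
    simp [neg_smul, Finset.sum_neg_distrib, sub_eq_add_neg]
  have h2 : (adH A (Em j i)).2 = (∑ k, A i k • Em j k + ∑ k, (-(A k j)) • Em k i).2 := by
    simp [adH, Em, Prod.snd_sum]
  exact Prod.ext h1 h2

theorem sum_sym3_swap13 {α : Type*} [AddCommMonoid α] {n : ℕ} (f : Fin n → Fin n → Fin n → α) :
    ∑ i, ∑ j, ∑ k, f i j k = ∑ i, ∑ j, ∑ k, f k j i := by
  calc ∑ i, ∑ j, ∑ k, f i j k
      = ∑ j, ∑ i, ∑ k, f i j k := Finset.sum_comm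
    _ = ∑ j, ∑ k, ∑ i, f i j k := Finset.sum_congr rfl fun j _ => Finset.sum_comm
    _ = ∑ k, ∑ j, ∑ i, f i j k := Finset.sum_comm

theorem sum_sym3_swap23 {α : Type*} [AddCommMonoid α] {n : ℕ} (f : Fin n → Fin n → Fin n → α) :
    ∑ i, ∑ j, ∑ k, f i j k = ∑ i, ∑ j, ∑ k, f i k j :=
  Finset.sum_congr rfl fun i _ => Finset.sum_comm

theorem sum_symmetrize {α : Type*} [AddCommMonoid α] {n : ℕ} (F : Fin n → Fin n → α) :
    ∑ i, ∑ j, F i j =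
      (∑ i : Fin n, ∑ j : Fin n, if (i : ℕ) < (j : ℕ) then F i j + F j i else 0)
        + ∑ i, F i i := by
  have h : ∀ i j : Fin n, F i j =
      (if (i : ℕ) < (j : ℕ) then F i j else 0) + ((if (j : ℕ) < (i : ℕ) then F i j else 0)
        + (if i = j then F i j else 0)) := by
    intro i j
    rcases lt_trichotomy (i : ℕ) (j : ℕ) with h' | h' | h'
    · have hne : i ≠ j := by intro hij; subst hij; omega
      rw [if_pos h', if_neg (by omega : ¬ (j:ℕ) < (i:ℕ)), if_neg hne]; simp
    · have : i = j := Fin.ext h'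
      simp [this]
    · have hne : i ≠ j := by intro hij; subst hij; omega
      rw [if_neg (by omega : ¬ (i:ℕ) < (j:ℕ)), if_pos h', if_neg hne]; simp
  calc ∑ i, ∑ j, F i j
      = (∑ i : Fin n, ∑ j : Fin n, if (i : ℕ) < (j : ℕ) then F i j else 0)
        + ((∑ i : Fin n, ∑ j : Fin n, if (j : ℕ) < (i : ℕ) then F i j else 0)
          + (∑ i : Fin n, ∑ j : Fin n, if i = j then F i j else 0)) := by
        simp only [← Finset.sum_add_distrib]
        exact Finset.sum_congr rfl fun i _ => Finset.sum_congr rfl fun j _ => h i j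
    _ = (∑ i : Fin n, ∑ j : Fin n, if (i : ℕ) < (j : ℕ) then F i j else 0)
        + ((∑ i : Fin n, ∑ j : Fin n, if (i : ℕ) < (j : ℕ) then F j i else 0)
          + ∑ i, F i i) := by
        congr 1
        congr 1
        · exact Finset.sum_comm
        · exact Finset.sum_congr rfl fun i _ => by simp
    _ = _ := by
        rw [← add_assoc]
        congr 1
        rw [← Finset.sum_add_distrib]
        refine Finset.sum_congr rfl fun i _ => ?_
        rw [← Finset.sum_add_distrib]
        refine Finset.sum_congr rfl fun j _ => ?_
        split <;> simp

theorem rho_term_eq (p q : ℕ) (i j : Fin (p + q)) (hij : (i : ℕ) < (j : ℕ)) :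
    (if (i : ℕ) < (j : ℕ) ∧ (j : ℕ) < p then basisWedge 2 ![i, j] ⊗ₜ[ℝ] alphaH i j else 0)
      - (if (i : ℕ) < (j : ℕ) ∧ p ≤ (i : ℕ) then basisWedge 2 ![i, j] ⊗ₜ[ℝ] alphaH i j else 0)
      - (if (i : ℕ) < p ∧ p ≤ (j : ℕ) then basisWedge 2 ![i, j] ⊗ₜ[ℝ] betaH i j else 0)
    = epsSgn p j • (Wd i j ⊗ₜ[ℝ] Em j i) + epsSgn p i • (Wd j i ⊗ₜ[ℝ] Em i j) := by
  have hα : alphaH i j = (Em j i - Em i j : Hpair (p + q)) := by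
    simp [alphaH, Em, Prod.ext_iff]
  have hβ : betaH i j = (Em j i + Em i j : Hpair (p + q)) := by
    simp [betaH, Em, Prod.ext_iff]
  rw [basisWedge_two, Wd_swap i j, hα, hβ, epsSgn, epsSgn]
  by_cases hjp : (j : ℕ) < p
  · have hip : (i : ℕ) < p := lt_trans hij hjp
    rw [if_pos ⟨hij, hjp⟩, if_neg (by omega), if_neg (by omega), if_pos hjp, if_pos hip,
      TensorProduct.tmul_sub, TensorProduct.neg_tmul]
    module
  · by_cases hip : (i : ℕ) < p
    · rw [if_neg (by omega), if_neg (by omega), if_pos ⟨hip, by omega⟩, if_neg hjp,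
        if_pos hip, TensorProduct.tmul_add, TensorProduct.neg_tmul]
      module
    · rw [if_neg (by omega), if_pos ⟨hij, by omega⟩, if_neg (by omega), if_neg hjp,
        if_neg hip, TensorProduct.tmul_sub, TensorProduct.neg_tmul]
      module

theorem rho_eq (p q : ℕ) :
    rhoPQ p q =
      ∑ i : Fin (p + q), ∑ j : Fin (p + q), epsSgn p j • (Wd i j ⊗ₜ[ℝ] Em j i) := by
  have h1 : rhoPQ p q = ∑ i : Fin (p + q), ∑ j : Fin (p + q),
      ((if (i : ℕ) < (j : ℕ) ∧ (j : ℕ) < p then basisWedge 2 ![i, j] ⊗ₜ[ℝ] alphaH i j else 0)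
      - (if (i : ℕ) < (j : ℕ) ∧ p ≤ (i : ℕ) then basisWedge 2 ![i, j] ⊗ₜ[ℝ] alphaH i j else 0)
      - (if (i : ℕ) < p ∧ p ≤ (j : ℕ) then basisWedge 2 ![i, j] ⊗ₜ[ℝ] betaH i j else 0)) := by
    rw [rhoPQ]
    simp only [Finset.sum_sub_distrib]
  rw [h1, sum_symmetrize, sum_symmetrize (fun i j => epsSgn p j • (Wd i j ⊗ₜ[ℝ] Em j i))]
  congr 1
  · refine Finset.sum_congr rfl fun i _ => Finset.sum_congr rfl fun j _ => ?_
    by_cases hij : (i : ℕ) < (j : ℕ)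
    · rw [if_pos hij, if_pos hij]
      have hGji :
          (if (j : ℕ) < (i : ℕ) ∧ (i : ℕ) < p then basisWedge 2 ![j, i] ⊗ₜ[ℝ] alphaH j i else 0)
          - (if (j : ℕ) < (i : ℕ) ∧ p ≤ (j : ℕ) then basisWedge 2 ![j, i] ⊗ₜ[ℝ] alphaH j i else 0)
          - (if (j : ℕ) < p ∧ p ≤ (i : ℕ) then basisWedge 2 ![j, i] ⊗ₜ[ℝ] betaH j i else 0)
          = 0 := by
        rw [if_neg (by omega), if_neg (by omega), if_neg (by omega)]
        simp
      rw [hGji, add_zero, rho_term_eq p q i j hij]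
    · rw [if_neg hij, if_neg hij]
  · refine Finset.sum_congr rfl fun i _ => ?_
    rw [Wd_diag]
    simp [(by omega : ¬ ((i : ℕ) < (i : ℕ) ∧ (i : ℕ) < p)),
      (by omega : ¬ ((i : ℕ) < (i : ℕ) ∧ p ≤ (i : ℕ))),
      (by omega : ¬ ((i : ℕ) < p ∧ p ≤ (i : ℕ)))]

noncomputable def S1 {n : ℕ} (p : ℕ) (A : Matrix (Fin n) (Fin n) ℝ) (i j k : Fin n) :
    ExteriorAlgebra ℝ (Fin n → ℝ) ⊗[ℝ] Hpair n :=
  (-(epsSgn p j * A k i)) • (Wd k j ⊗ₜ[ℝ] Em j i)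

noncomputable def S2 {n : ℕ} (p : ℕ) (A : Matrix (Fin n) (Fin n) ℝ) (i j k : Fin n) :
    ExteriorAlgebra ℝ (Fin n → ℝ) ⊗[ℝ] Hpair n :=
  (-(epsSgn p j * A k j)) • (Wd i k ⊗ₜ[ℝ] Em j i)

noncomputable def S3 {n : ℕ} (p : ℕ) (A : Matrix (Fin n) (Fin n) ℝ) (i j k : Fin n) :
    ExteriorAlgebra ℝ (Fin n → ℝ) ⊗[ℝ] Hpair n :=
  (epsSgn p j * A i k) • (Wd i j ⊗ₜ[ℝ] Em j k)

noncomputable def S4 {n : ℕ} (p : ℕ) (A : Matrix (Fin n) (Fin n) ℝ) (i j k : Fin n) :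
    ExteriorAlgebra ℝ (Fin n → ℝ) ⊗[ℝ] Hpair n :=
  (-(epsSgn p j * A k j)) • (Wd i j ⊗ₜ[ℝ] Em k i)

theorem act_term {n : ℕ} (p : ℕ) (A : Matrix (Fin n) (Fin n) ℝ) (i j : Fin n) :
    actEH A (epsSgn p j • (Wd i j ⊗ₜ[ℝ] Em j i)) =
      ∑ k, (S1 p A i j k + S2 p A i j k + S3 p A i j k + S4 p A i j k) := by
  rw [LinearMap.map_smul]
  have h : actEH A (Wd i j ⊗ₜ[ℝ] Em j i) =
      leibnizDer (adV A) (Wd i j) ⊗ₜ[ℝ] Em j i + Wd i j ⊗ₜ[ℝ] adH A (Em j i) := by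
    simp [actEH]
  rw [h, leibnizDer_Wd, adH_Em]
  simp only [TensorProduct.add_tmul, TensorProduct.tmul_add, TensorProduct.sum_tmul,
    TensorProduct.tmul_sum, ← TensorProduct.smul_tmul', TensorProduct.tmul_smul,
    smul_add, Finset.smul_sum, smul_smul, S1, S2, S3, S4, ← Finset.sum_add_distrib]
  refine Finset.sum_congr rfl fun k _ => ?_
  module

/-- `ρ_{pq} ∈ Λ²𝔍ₙ ⊗ 𝔥_{p,q}` is `so(p,q)`-invariant:
`g·ρ_{pq} = 0` for every `g ∈ so(p,q)`, with `g·(w⊗h) = [g,w]⊗h + w⊗[g,h]`. -/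

theorem rhoPQ_so_invariant (p q : ℕ) :
    ∀ A ∈ soSet p q, actEH A (rhoPQ p q) = 0 := by
  intro A hA
  have hso : ∀ j k : Fin (p + q), epsSgn p k * A j k + epsSgn p j * A k j = 0 := by
    intro j k
    have h1 : Aᵀ * Jmat p q = -(Jmat p q * A) := hA
    have h2 := congrFun (congrFun h1 k) j
    simp only [Jmat, Matrix.mul_diagonal, Matrix.diagonal_mul, Matrix.neg_apply,
      Matrix.transpose_apply] at h2
    by_cases hj : (j : ℕ) < p <;> by_cases hk : (k : ℕ) < p <;>
      simp only [epsSgn, hj, hk, if_true, if_false, reduceIte] at h2 ⊢ <;> linarith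
  have hsum : actEH A (rhoPQ p q) =
      ∑ i : Fin (p + q), ∑ j : Fin (p + q), ∑ k : Fin (p + q),
        (S1 p A i j k + S2 p A i j k + S3 p A i j k + S4 p A i j k) := by
    rw [rho_eq, map_sum]
    refine Finset.sum_congr rfl fun i _ => ?_
    rw [map_sum]
    exact Finset.sum_congr rfl fun j _ => act_term p A i j
  rw [hsum]
  simp only [Finset.sum_add_distrib]
  have h3 : ∑ i : Fin (p + q), ∑ j : Fin (p + q), ∑ k : Fin (p + q), S3 p A i j k
      = - ∑ i : Fin (p + q), ∑ j : Fin (p + q), ∑ k : Fin (p + q), S1 p A i j k := by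
    rw [sum_sym3_swap13 (fun i j k => S3 p A i j k)]
    have hpt : ∀ i j k : Fin (p + q), S3 p A k j i = - S1 p A i j k := by
      intro i j k
      simp only [S3, S1]; module
    simp only [hpt, Finset.sum_neg_distrib]
  have h2 : ∑ i : Fin (p + q), ∑ j : Fin (p + q), ∑ k : Fin (p + q), S2 p A i j k
      = - ∑ i : Fin (p + q), ∑ j : Fin (p + q), ∑ k : Fin (p + q), S4 p A i j k := by
    rw [sum_sym3_swap23 (fun i j k => S2 p A i j k)]
    have hpt : ∀ i j k : Fin (p + q), S2 p A i k j = - S4 p A i j k := by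
      intro i j k
      have hc : -(epsSgn p k * A j k) = epsSgn p j * A k j := by
        have := hso j k; linarith
      simp only [S2, S4, hc]; module
    simp only [hpt, Finset.sum_neg_distrib]
  rw [h3, h2]
  abel
end

section
/- The element β_{pq} = Σ_{i=1}^{p} (−1)^{i+1} (∂/∂x_1 ∧ ... ∧ ∂̂/∂x_i ∧ ... ∧ ∂/∂x_n) ⊗ ∂/∂x_i − Σ_{i=p+1}^{n} (−1)^{i} (∂/∂x_1 ∧ ... ∧ ∂̂/∂x_i ∧ ... ∧ ∂/∂x_n) ⊗ ∂/∂x_i ∈ Λ^{n−1}𝔍_n ⊗ 𝔥_{p,q} is so(p,q)-invariant. -/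
open ExteriorAlgebra

variable {M : Type*} [AddCommGroup M] [Module ℝ M]

open Matrix

open TensorProduct

/-- The increasing embedding `Fin (n-1) → Fin n` omitting the index `i`. -/
def omitMap (n : ℕ) (i : ℕ) (k : Fin (n - 1)) : Fin n :=
  ⟨if (k : ℕ) < i then (k : ℕ) else (k : ℕ) + 1, by have := k.isLt; split <;> omega⟩

/-- `β_{pq} = Σ_{i≤p} (−1)^{i+1} (∂₁∧…∧∂̂ᵢ∧…∧∂ₙ) ⊗ ∂ᵢ − Σ_{i>p} (−1)^i (∂₁∧…∧∂̂ᵢ∧…∧∂ₙ) ⊗ ∂ᵢ`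
(1-based signs; below `i` is 0-based, so `(−1)^{i+1}` becomes `(−1)^{(i+1)+1}` etc.). -/
noncomputable def betaPQ (p q : ℕ) :
    ExteriorAlgebra ℝ (Fin (p + q) → ℝ) ⊗[ℝ] Hpair (p + q) :=
  (∑ i : Fin (p + q),
      if (i : ℕ) < p then
        ((-1 : ℝ) ^ ((i : ℕ) + 1 + 1)) •
          (basisWedge (p + q - 1) (omitMap (p + q) (i : ℕ)) ⊗ₜ[ℝ] ddH i) else 0)
  - (∑ i : Fin (p + q),
      if p ≤ (i : ℕ) then
        ((-1 : ℝ) ^ ((i : ℕ) + 1)) •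
          (basisWedge (p + q - 1) (omitMap (p + q) (i : ℕ)) ⊗ₜ[ℝ] ddH i) else 0)

namespace BetaAux

open ExteriorAlgebra

/-- parity congruence for powers of -1 -/
lemma negpow_congr {a b : ℕ} (h : a % 2 = b % 2) : (-1 : ℝ) ^ a = (-1 : ℝ) ^ b := by
  rw [← Nat.div_add_mod a 2, ← Nat.div_add_mod b 2, h, pow_add, pow_add, pow_mul, pow_mul,
    neg_one_sq, one_pow, one_pow]

variable {n : ℕ}

/-- basis vector of `ℝⁿ` indexed by a natural number -/
noncomputable def sing (n : ℕ) (j : ℕ) : Fin n → ℝ :=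
  if h : j < n then (Pi.single (⟨j, h⟩ : Fin n) 1 : Fin n → ℝ) else 0

lemma sing_coe (j : Fin n) : sing n (j : ℕ) = Pi.single j 1 := by
  simp [sing, j.isLt]

section anticomm

variable {M : Type*} [AddCommGroup M] [Module ℝ M]

lemma iota_mul_prod (x : M) (l : List M) :
    ι ℝ x * (l.map fun y => ι ℝ y).prod
      = ((-1 : ℝ) ^ l.length) • ((l.map fun y => ι ℝ y).prod * ι ℝ x) := by
  induction l with
  | nil => simp
  | cons a l ih =>
    have h : ι ℝ x * ι ℝ a = -(ι ℝ a * ι ℝ x) :=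
      eq_neg_of_add_eq_zero_left (ι_add_mul_swap x a)
    simp only [List.map_cons, List.prod_cons, List.length_cons]
    calc ι ℝ x * (ι ℝ a * (l.map fun y => ι ℝ y).prod)
        = (ι ℝ x * ι ℝ a) * (l.map fun y => ι ℝ y).prod := by rw [mul_assoc]
      _ = -(ι ℝ a * (ι ℝ x * (l.map fun y => ι ℝ y).prod)) := by rw [h]; simp [mul_assoc]
      _ = -(ι ℝ a * (((-1 : ℝ) ^ l.length) • ((l.map fun y => ι ℝ y).prod * ι ℝ x))) := by
          rw [ih]
      _ = ((-1 : ℝ) ^ (l.length + 1)) • (ι ℝ a * (l.map fun y => ι ℝ y).prod * ι ℝ x) := by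
          rw [mul_smul_comm, pow_succ]
          rw [← neg_smul]
          congr 1
          · ring
          · rw [mul_assoc]

lemma prod_mul_iota (x : M) (l : List M) :
    (l.map fun y => ι ℝ y).prod * ι ℝ x
      = ((-1 : ℝ) ^ l.length) • (ι ℝ x * (l.map fun y => ι ℝ y).prod) := by
  rw [iota_mul_prod, smul_smul, ← pow_add]
  rw [Even.neg_one_pow ⟨l.length, rfl⟩, one_smul]

end anticomm

end BetaAux
namespace BetaAux

variable {n : ℕ} {α : Type*}

lemma ofFn_omit_eq (F : ℕ → α) (i : ℕ) (hi : i < n) :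
    (List.ofFn fun r : Fin (n - 1) => F ((omitMap n i r : Fin n) : ℕ)) =
      (List.range' 0 i).map F ++ (List.range' (i + 1) (n - 1 - i)).map F := by
  apply List.ext_getElem
  · simp; omega
  intro r h1 h2
  simp only [List.getElem_ofFn, List.getElem_append, List.length_map, List.length_range',
    List.getElem_map, List.getElem_range']
  have h1' : r < n - 1 := by simpa using h1
  show F (if r < i then r else r + 1) = _
  split_ifs <;> exact congrArg F (by omega)

lemma ofFn_update_gt (F : ℕ → α) (i t : ℕ) (ht : i ≤ t) (htn : t < n - 1) :
    (List.ofFn fun r : Fin (n - 1) =>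
        F (if (r : ℕ) = t then i else if (r : ℕ) < i then (r : ℕ) else (r : ℕ) + 1)) =
      (List.range' 0 i).map F ++ (List.range' (i + 1) (t - i)).map F ++ [F i] ++
        (List.range' (t + 2) (n - 1 - (t + 1))).map F := by
  apply List.ext_getElem
  · simp; omega
  intro r h1 h2
  simp only [List.getElem_ofFn, List.getElem_append, List.length_map, List.length_range',
    List.getElem_map, List.getElem_range', List.length_append, List.length_singleton,
    List.getElem_singleton]
  have h1' : r < n - 1 := by simpa using h1
  split_ifs <;> exact congrArg F (by omega)

lemma ofFn_update_lt (F : ℕ → α) (i t : ℕ) (ht : t < i) (hi : i < n) :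
    (List.ofFn fun r : Fin (n - 1) =>
        F (if (r : ℕ) = t then i else if (r : ℕ) < i then (r : ℕ) else (r : ℕ) + 1)) =
      (List.range' 0 t).map F ++ [F i] ++ (List.range' (t + 1) (i - t - 1)).map F ++
        (List.range' (i + 1) (n - 1 - i)).map F := by
  apply List.ext_getElem
  · simp; omega
  intro r h1 h2
  simp only [List.getElem_ofFn, List.getElem_append, List.length_map, List.length_range',
    List.getElem_map, List.getElem_range', List.length_append, List.length_singleton,
    List.getElem_singleton]
  have h1' : r < n - 1 := by simpa using h1
  split_ifs <;> exact congrArg F (by omega)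

end BetaAux
namespace BetaAux

open ExteriorAlgebra

variable {n : ℕ}

/-- product of `ι` of basis vectors over a block of indices `[a, a+len)` -/
noncomputable def blk (n a len : ℕ) : ExteriorAlgebra ℝ (Fin n → ℝ) :=
  (((List.range' a len).map (sing n)).map fun y => ι ℝ y).prod

lemma blk_eq (a l : ℕ) :
    (((List.range' a l).map (sing n)).map fun y => ι ℝ y).prod = blk n a l := rfl

lemma blk_split (a l1 l2 : ℕ) : blk n a (l1 + l2) = blk n a l1 * blk n (a + l1) l2 := by
  have h := @List.range'_append a l1 l2 1
  simp only [one_mul] at h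
  rw [blk, blk, blk, ← List.prod_append, ← List.map_append, ← List.map_append, h]

lemma blk_succ (a l : ℕ) : blk n a (l + 1) = ι ℝ (sing n a) * blk n (a + 1) l := by
  rw [blk, blk, List.range'_succ, List.map_cons, List.map_cons, List.prod_cons]

lemma blk_length_smul (x : Fin n → ℝ) (a l : ℕ) :
    ι ℝ x * blk n a l = ((-1 : ℝ) ^ l) • (blk n a l * ι ℝ x) := by
  have := iota_mul_prod x ((List.range' a l).map (sing n))
  simpa [blk] using this

lemma basisWedge_eq_prod (i : ℕ) (hi : i < n) :
    basisWedge (n - 1) (omitMap n i) = blk n 0 i * blk n (i + 1) (n - 1 - i) := by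
  rw [basisWedge, ιMulti_apply]
  have h1 : (List.ofFn fun t : Fin (n - 1) =>
      ι ℝ (Pi.single (omitMap n i t) (1 : ℝ) : Fin n → ℝ)) =
      ((List.ofFn fun t : Fin (n - 1) => sing n ((omitMap n i t : Fin n) : ℕ)).map
        fun y => ι ℝ y) := by
    rw [List.map_ofFn]
    congr 1
    funext t
    rw [Function.comp_apply, sing_coe]
  rw [h1, ofFn_omit_eq (sing n) i hi, List.map_append, List.prod_append, blk_eq, blk_eq]

lemma key_sign (i : Fin n) (t : Fin (n - 1)) :
    ExteriorAlgebra.ιMulti ℝ (n - 1)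
        (Function.update
          (fun r : Fin (n - 1) => (Pi.single (omitMap n (i : ℕ) r) (1 : ℝ) : Fin n → ℝ)) t
          (Pi.single i 1)) =
      ((-1 : ℝ) ^ ((i : ℕ) + ((omitMap n (i : ℕ) t : Fin n) : ℕ) + 1)) •
        basisWedge (n - 1) (omitMap n ((omitMap n (i : ℕ) t : Fin n) : ℕ)) := by
  have htn : (t : ℕ) < n - 1 := t.isLt
  have hin : (i : ℕ) < n := i.isLt
  have hsingle : (Pi.single i (1 : ℝ) : Fin n → ℝ) = sing n (i : ℕ) := (sing_coe i).symm
  have hfam : (Function.update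
      (fun r : Fin (n - 1) => (Pi.single (omitMap n (i : ℕ) r) (1 : ℝ) : Fin n → ℝ)) t
      (Pi.single i 1)) =
      fun r : Fin (n - 1) =>
        sing n (if (r : ℕ) = (t : ℕ) then (i : ℕ)
          else if (r : ℕ) < (i : ℕ) then (r : ℕ) else (r : ℕ) + 1) := by
    funext r
    rw [Function.update_apply]
    by_cases hr : r = t
    · subst hr
      rw [if_pos rfl, if_pos rfl, sing_coe]
    · have hr' : (r : ℕ) ≠ (t : ℕ) := fun h => hr (Fin.ext h)
      rw [if_neg hr, if_neg hr']
      exact (sing_coe (omitMap n (i : ℕ) r)).symm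
  rw [hfam, ιMulti_apply]
  have hmap : (List.ofFn fun r : Fin (n - 1) =>
      ι ℝ (sing n (if (r : ℕ) = (t : ℕ) then (i : ℕ)
        else if (r : ℕ) < (i : ℕ) then (r : ℕ) else (r : ℕ) + 1))) =
      ((List.ofFn fun r : Fin (n - 1) =>
        sing n (if (r : ℕ) = (t : ℕ) then (i : ℕ)
          else if (r : ℕ) < (i : ℕ) then (r : ℕ) else (r : ℕ) + 1)).map fun y => ι ℝ y) := by
    rw [List.map_ofFn]; rfl
  rw [hmap]
  have hkval : ((omitMap n (i : ℕ) t : Fin n) : ℕ)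
      = if (t : ℕ) < (i : ℕ) then (t : ℕ) else (t : ℕ) + 1 := rfl
  by_cases hti : (t : ℕ) < (i : ℕ)
  · -- k = t < i
    rw [hkval, if_pos hti]
    rw [ofFn_update_lt (sing n) (i : ℕ) (t : ℕ) hti hin]
    rw [basisWedge_eq_prod (t : ℕ) (by omega)]
    simp only [List.map_append, List.prod_append, List.map_singleton, List.prod_singleton]
    rw [blk_eq, blk_eq, blk_eq]
    have hsplit : blk n ((t : ℕ) + 1) (n - 1 - (t : ℕ)) =
        blk n ((t : ℕ) + 1) ((i : ℕ) - (t : ℕ) - 1) *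
          (ι ℝ (sing n (i : ℕ)) * blk n ((i : ℕ) + 1) (n - 1 - (i : ℕ))) := by
      rw [show n - 1 - (t : ℕ) = ((i : ℕ) - (t : ℕ) - 1) + ((n - 1 - (i : ℕ)) + 1) by omega,
        blk_split, blk_succ, show (t : ℕ) + 1 + ((i : ℕ) - (t : ℕ) - 1) = (i : ℕ) by omega]
    rw [hsplit]
    rw [mul_assoc (blk n 0 (t : ℕ)) (ι ℝ (sing n (i : ℕ)))
        (blk n ((t : ℕ) + 1) ((i : ℕ) - (t : ℕ) - 1)),
      blk_length_smul (sing n (i : ℕ)) ((t : ℕ) + 1) ((i : ℕ) - (t : ℕ) - 1)]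
    rw [mul_smul_comm, smul_mul_assoc]
    rw [negpow_congr (a := (i : ℕ) - (t : ℕ) - 1) (b := (i : ℕ) + (t : ℕ) + 1) (by omega)]
    congr 1
    simp only [mul_assoc]
  · -- k = t + 1 > i
    have hit : (i : ℕ) ≤ (t : ℕ) := by omega
    rw [hkval, if_neg hti]
    rw [ofFn_update_gt (sing n) (i : ℕ) (t : ℕ) hit htn]
    rw [basisWedge_eq_prod ((t : ℕ) + 1) (by omega)]
    simp only [List.map_append, List.prod_append, List.map_singleton, List.prod_singleton]
    rw [blk_eq, blk_eq, blk_eq]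
    have hsplit : blk n 0 ((t : ℕ) + 1) =
        blk n 0 (i : ℕ) * (ι ℝ (sing n (i : ℕ)) * blk n ((i : ℕ) + 1) ((t : ℕ) - (i : ℕ))) := by
      rw [show (t : ℕ) + 1 = (i : ℕ) + (((t : ℕ) - (i : ℕ)) + 1) by omega, blk_split, blk_succ]
      simp only [Nat.zero_add]
    rw [hsplit]
    rw [blk_length_smul (sing n (i : ℕ)) ((i : ℕ) + 1) ((t : ℕ) - (i : ℕ))]
    rw [mul_smul_comm, smul_mul_assoc, smul_smul, ← pow_add]
    rw [show (i : ℕ) + ((t : ℕ) + 1) + 1 + ((t : ℕ) - (i : ℕ)) = 2 * ((t : ℕ) + 1) by omega]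
    rw [pow_mul, neg_one_sq, one_pow, one_smul]
    simp only [mul_assoc]

end BetaAux
namespace BetaAux

open ExteriorAlgebra

variable {n : ℕ}

lemma upd_zero (i j : Fin n) (t : Fin (n - 1)) (hji : j ≠ i) (hjo : j ≠ omitMap n (i : ℕ) t) :
    ExteriorAlgebra.ιMulti ℝ (n - 1)
        (Function.update
          (fun r : Fin (n - 1) => (Pi.single (omitMap n (i : ℕ) r) (1 : ℝ) : Fin n → ℝ)) t
          (Pi.single j 1)) = 0 := by
  have hji' : (j : ℕ) ≠ (i : ℕ) := fun h => hji (Fin.ext h)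
  have hr : ∃ r : Fin (n - 1), omitMap n (i : ℕ) r = j := by
    refine ⟨⟨if (j : ℕ) < (i : ℕ) then (j : ℕ) else (j : ℕ) - 1, ?_⟩, ?_⟩
    · have := j.isLt; have := i.isLt; split_ifs <;> omega
    · apply Fin.ext
      simp only [omitMap]
      have := j.isLt
      split_ifs <;> omega
  obtain ⟨r, hrj⟩ := hr
  have hrt : r ≠ t := by
    intro h
    exact hjo (by rw [← hrj, h])
  apply AlternatingMap.map_eq_zero_of_eq _ _ (i := r) (j := t) _ hrt
  rw [Function.update_apply, if_neg hrt, Function.update_apply, if_pos rfl, hrj]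

lemma adV_single (A : Matrix (Fin n) (Fin n) ℝ) (k : Fin n) :
    adV A (Pi.single k 1) = ∑ j : Fin n, (-(A j k)) • (Pi.single j (1 : ℝ) : Fin n → ℝ) := by
  funext m
  simp only [adV, LinearMap.neg_apply, Matrix.mulVecLin_apply, Matrix.mulVec_single,
    Pi.neg_apply, mul_one, Finset.sum_apply, Pi.smul_apply, Pi.single_apply, smul_eq_mul,
    mul_ite, mul_one, mul_zero]
  simp

lemma adH_dd (A : Matrix (Fin n) (Fin n) ℝ) (i : Fin n) :
    adH A (ddH i) = ((0 : Matrix (Fin n) (Fin n) ℝ), fun j => -(A j i)) := by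
  simp only [adH, ddH, LinearMap.prod_apply, LinearMap.comp_apply, LinearMap.fst_apply,
    LinearMap.snd_apply, Pi.prod]
  refine Prod.ext ?_ ?_
  · simp
  · simp only [LinearMap.neg_apply, Matrix.mulVecLin_apply, Matrix.mulVec_single]
    funext j
    simp

lemma tmul_translation (x : ExteriorAlgebra ℝ (Fin n → ℝ)) (w : Fin n → ℝ) :
    (x ⊗ₜ[ℝ] (((0 : Matrix (Fin n) (Fin n) ℝ), w) : Hpair n)) =
      ∑ j : Fin n, (w j) • (x ⊗ₜ[ℝ] ddH j) := by
  have h : (((0 : Matrix (Fin n) (Fin n) ℝ), w) : Hpair n) = ∑ j : Fin n, (w j) • ddH j := by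
    refine Prod.ext ?_ ?_
    · rw [Prod.fst_sum]
      simp [ddH]
    · rw [Prod.snd_sum]
      funext m
      simp only [ddH, Prod.smul_snd, Finset.sum_apply, Pi.smul_apply, Pi.single_apply,
        smul_eq_mul, mul_ite, mul_one, mul_zero]
      simp
  rw [h, TensorProduct.tmul_sum]
  refine Finset.sum_congr rfl fun j _ => ?_
  rw [TensorProduct.tmul_smul]

end BetaAux
namespace BetaAux

open ExteriorAlgebra TensorProduct

variable {n : ℕ}

lemma omit_ne (i : Fin n) (t : Fin (n - 1)) : omitMap n (i : ℕ) t ≠ i := by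
  intro h
  have h' : ((omitMap n (i : ℕ) t : Fin n) : ℕ) = (i : ℕ) := congrArg Fin.val h
  have ht := t.isLt
  simp only [omitMap] at h'
  split_ifs at h' <;> omega

lemma omit_surj (i j : Fin n) (hji : j ≠ i) : ∃ r : Fin (n - 1), omitMap n (i : ℕ) r = j := by
  have hji' : (j : ℕ) ≠ (i : ℕ) := fun h => hji (Fin.ext h)
  refine ⟨⟨if (j : ℕ) < (i : ℕ) then (j : ℕ) else (j : ℕ) - 1, ?_⟩, ?_⟩
  · have := j.isLt; have := i.isLt; split_ifs <;> omega
  · apply Fin.ext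
    simp only [omitMap]
    have := j.isLt
    split_ifs <;> omega

lemma sum_omit {β : Type*} [AddCommMonoid β] (i : Fin n) (F : Fin n → β) (h0 : F i = 0) :
    (∑ t : Fin (n - 1), F (omitMap n (i : ℕ) t)) = ∑ j : Fin n, F j := by
  rw [← Finset.sum_erase_add Finset.univ F (Finset.mem_univ i), h0, add_zero]
  refine Finset.sum_bij (fun t _ => omitMap n (i : ℕ) t) ?_ ?_ ?_ ?_
  · intro t _
    exact Finset.mem_erase.2 ⟨omit_ne i t, Finset.mem_univ _⟩
  · intro t1 _ t2 _ h
    have h' := congrArg Fin.val h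
    simp only [omitMap] at h'
    apply Fin.ext
    split_ifs at h' <;> omega
  · intro b hb
    obtain ⟨r, hr⟩ := omit_surj i b (Finset.ne_of_mem_erase hb)
    exact ⟨r, Finset.mem_univ r, hr⟩
  · intro t _
    rfl

lemma leibniz_basisWedge (A : Matrix (Fin n) (Fin n) ℝ) (hdiag : ∀ m, A m m = 0) (i : Fin n) :
    leibnizDer (adV A) (basisWedge (n - 1) (omitMap n (i : ℕ))) =
      ∑ t : Fin (n - 1),
        (((-1 : ℝ) ^ ((i : ℕ) + ((omitMap n (i : ℕ) t : Fin n) : ℕ))) *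
            A i (omitMap n (i : ℕ) t)) •
          basisWedge (n - 1) (omitMap n ((omitMap n (i : ℕ) t : Fin n) : ℕ)) := by
  rw [basisWedge, leibnizDer, liftAlternating_apply_ιMulti]
  have h0 : (leibnizAlt (adV A) (n - 1))
        (fun t : Fin (n - 1) => (Pi.single (omitMap n (i : ℕ) t) (1 : ℝ) : Fin n → ℝ)) =
      leibnizMulti (adV A) (n - 1)
        (fun t : Fin (n - 1) => (Pi.single (omitMap n (i : ℕ) t) (1 : ℝ) : Fin n → ℝ)) := rfl
  rw [h0, leibnizMulti_apply]
  refine Finset.sum_congr rfl fun t _ => ?_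
  -- rewrite the family as an update
  have hupd : (fun j : Fin (n - 1) =>
      if j = t then adV A (Pi.single (omitMap n (i : ℕ) j) 1)
        else (Pi.single (omitMap n (i : ℕ) j) (1 : ℝ) : Fin n → ℝ)) =
      Function.update (fun r : Fin (n - 1) => (Pi.single (omitMap n (i : ℕ) r) (1 : ℝ) : Fin n → ℝ))
        t (adV A (Pi.single (omitMap n (i : ℕ) t) 1)) := by
    funext j
    rw [Function.update_apply]
    by_cases hj : j = t
    · subst hj; simp
    · rw [if_neg hj, if_neg hj]
  rw [hupd, adV_single]
  set v : Fin (n - 1) → (Fin n → ℝ) :=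
    fun r => (Pi.single (omitMap n (i : ℕ) r) (1 : ℝ) : Fin n → ℝ) with hv
  have hsum := MultilinearMap.map_update_sum
    ((ExteriorAlgebra.ιMulti ℝ (n - 1)
      (M := Fin n → ℝ)).toMultilinearMap) Finset.univ t
    (fun j : Fin n => (-(A j (omitMap n (i : ℕ) t))) • (Pi.single j (1 : ℝ) : Fin n → ℝ)) v
  simp only [AlternatingMap.coe_multilinearMap] at hsum
  rw [hsum]
  have hterm : ∀ j : Fin n,
      (ExteriorAlgebra.ιMulti ℝ (n - 1))
          (Function.update v t ((-(A j (omitMap n (i : ℕ) t))) • (Pi.single j (1 : ℝ) : Fin n → ℝ)))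
        = (-(A j (omitMap n (i : ℕ) t))) •
          (ExteriorAlgebra.ιMulti ℝ (n - 1)) (Function.update v t (Pi.single j 1)) := by
    intro j
    exact AlternatingMap.map_update_smul _ v t _ _
  rw [Finset.sum_congr rfl fun j _ => hterm j]
  rw [Finset.sum_eq_single i]
  · rw [hv, key_sign i t, smul_smul]
    congr 1
    rw [pow_succ]
    ring
  · intro j _ hji
    by_cases hjo : j = omitMap n (i : ℕ) t
    · subst hjo
      rw [hdiag]
      simp
    · rw [hv, upd_zero i j t hji hjo, smul_zero]
  · intro h
    exact absurd (Finset.mem_univ i) h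

lemma main_aux (A : Matrix (Fin n) (Fin n) ℝ) (hdiag : ∀ m, A m m = 0) :
    actEH A (∑ i : Fin n, ((-1 : ℝ) ^ (i : ℕ)) •
      (basisWedge (n - 1) (omitMap n (i : ℕ)) ⊗ₜ[ℝ] ddH i)) = 0 := by
  rw [map_sum]
  have step1 : ∀ i : Fin n,
      actEH A (((-1 : ℝ) ^ (i : ℕ)) • (basisWedge (n - 1) (omitMap n (i : ℕ)) ⊗ₜ[ℝ] ddH i)) =
      (∑ j : Fin n, (((-1 : ℝ) ^ (j : ℕ)) * A i j) •
          (basisWedge (n - 1) (omitMap n (j : ℕ)) ⊗ₜ[ℝ] ddH i))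
        + ∑ j : Fin n, (-(((-1 : ℝ) ^ (i : ℕ)) * A j i)) •
          (basisWedge (n - 1) (omitMap n (i : ℕ)) ⊗ₜ[ℝ] ddH j) := by
    intro i
    rw [_root_.map_smul]
    have hact : actEH A (basisWedge (n - 1) (omitMap n (i : ℕ)) ⊗ₜ[ℝ] ddH i)
        = (leibnizDer (adV A) (basisWedge (n - 1) (omitMap n (i : ℕ)))) ⊗ₜ[ℝ] ddH i
          + basisWedge (n - 1) (omitMap n (i : ℕ)) ⊗ₜ[ℝ] adH A (ddH i) := by
      simp [actEH, TensorProduct.map_tmul]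
    rw [hact, smul_add]
    congr 1
    · -- Leibniz part
      rw [leibniz_basisWedge A hdiag i, TensorProduct.sum_tmul, Finset.smul_sum]
      have h1 : ∀ t : Fin (n - 1),
          ((-1 : ℝ) ^ (i : ℕ)) •
            (((((-1 : ℝ) ^ ((i : ℕ) + ((omitMap n (i : ℕ) t : Fin n) : ℕ))) *
                A i (omitMap n (i : ℕ) t)) •
              basisWedge (n - 1) (omitMap n ((omitMap n (i : ℕ) t : Fin n) : ℕ))) ⊗ₜ[ℝ] ddH i)
          = (fun j : Fin n => (((-1 : ℝ) ^ (j : ℕ)) * A i j) •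
              (basisWedge (n - 1) (omitMap n (j : ℕ)) ⊗ₜ[ℝ] ddH i)) (omitMap n (i : ℕ) t) := by
        intro t
        simp only []
        rw [← TensorProduct.smul_tmul', smul_smul, ← mul_assoc, ← pow_add,
          negpow_congr (a := (i : ℕ) + ((i : ℕ) + ((omitMap n (i : ℕ) t : Fin n) : ℕ)))
            (b := ((omitMap n (i : ℕ) t : Fin n) : ℕ)) (by omega)]
      rw [Finset.sum_congr rfl fun t _ => h1 t]
      exact sum_omit i
        (fun j : Fin n => (((-1 : ℝ) ^ (j : ℕ)) * A i j) •
          (basisWedge (n - 1) (omitMap n (j : ℕ)) ⊗ₜ[ℝ] ddH i))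
        (by simp [hdiag])
    · -- translation part
      rw [adH_dd A i, tmul_translation, Finset.smul_sum]
      refine Finset.sum_congr rfl fun j _ => ?_
      rw [smul_smul]
      congr 1
      ring
  rw [Finset.sum_congr rfl fun i _ => step1 i, Finset.sum_add_distrib]
  have hswap : (∑ i : Fin n, ∑ j : Fin n, (-(((-1 : ℝ) ^ (i : ℕ)) * A j i)) •
        (basisWedge (n - 1) (omitMap n (i : ℕ)) ⊗ₜ[ℝ] ddH j))
      = ∑ i : Fin n, ∑ j : Fin n, (-(((-1 : ℝ) ^ (j : ℕ)) * A i j)) •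
        (basisWedge (n - 1) (omitMap n (j : ℕ)) ⊗ₜ[ℝ] ddH i) := Finset.sum_comm
  rw [hswap, ← Finset.sum_add_distrib]
  refine Finset.sum_eq_zero fun i _ => ?_
  rw [← Finset.sum_add_distrib]
  refine Finset.sum_eq_zero fun j _ => ?_
  module

end BetaAux

/-- `β_{pq} ∈ Λ^{n−1}𝔍ₙ ⊗ 𝔥_{p,q}` is `so(p,q)`-invariant. -/
theorem betaPQ_so_invariant (p q : ℕ) :
    ∀ A ∈ soSet p q, actEH A (betaPQ p q) = 0 := by
  intro A hA
  have hdiag : ∀ m, A m m = 0 := by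
    intro m
    have h := congrFun (congrFun hA m) m
    simp only [Jmat, Matrix.mul_diagonal, Matrix.diagonal_mul, Matrix.neg_apply,
      Matrix.transpose_apply] at h
    by_cases hm : (m : ℕ) < p
    · rw [if_pos hm] at h; linarith
    · rw [if_neg hm] at h; linarith
  have hbeta : betaPQ p q = ∑ i : Fin (p + q), ((-1 : ℝ) ^ (i : ℕ)) •
      (basisWedge (p + q - 1) (omitMap (p + q) (i : ℕ)) ⊗ₜ[ℝ] ddH i) := by
    rw [betaPQ, ← Finset.sum_sub_distrib]
    refine Finset.sum_congr rfl fun i _ => ?_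
    by_cases h : (i : ℕ) < p
    · rw [if_pos h, if_neg (by omega), sub_zero,
        show ((-1 : ℝ) ^ ((i : ℕ) + 1 + 1)) = (-1 : ℝ) ^ (i : ℕ) from by
          rw [pow_succ, pow_succ]; ring]
    · rw [if_neg h, if_pos (by omega), zero_sub,
        show ((-1 : ℝ) ^ ((i : ℕ) + 1)) = -((-1 : ℝ) ^ (i : ℕ)) from by
          rw [pow_succ]; ring]
      module
  rw [hbeta]
  exact BetaAux.main_aux A hdiag
end

section
/- The map I : 𝔥_{p,q} → 𝔥_{p,q}, projecting onto the translation ideal (I(∂/∂x_i) = ∂/∂x_i, I(α_{ij}) = I(β_{ij}) = 0), is a Chevalley–Eilenberg 1-cocycle of 𝔥_{p,q} with adjoint coefficients which is not a coboundary; in particular H¹_Lie(𝔥_{p,q}; 𝔥_{p,q}) contains the nonzero class [I]. -/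
open Matrix

/-- The Lie bracket of affine vector fields: for `X(x) = A x + v`, `Y(x) = B x + w`,
`[X,Y](x) = (BA − AB) x + (B v − A w)`. -/
def hBracket {n : ℕ} (X Y : Hpair n) : Hpair n :=
  (Y.1 * X.1 - X.1 * Y.1, Y.1.mulVec X.2 - X.1.mulVec Y.2)

/-- The projection `I` onto the translation ideal. -/
def Imap {n : ℕ} : Hpair n →ₗ[ℝ] Hpair n :=
  LinearMap.prod 0 (LinearMap.snd ℝ _ _)

/-- `I` is a Chevalley–Eilenberg 1-cocycle of `𝔥_{p,q}` with adjoint coefficients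
(`I([x,y]) = [x, I(y)] − [y, I(x)]` for all `x, y ∈ 𝔥_{p,q}`) which is not a coboundary
(`I ≠ ad_z` on `𝔥_{p,q}` for every `z ∈ 𝔥_{p,q}`); in particular the class `[I]` is a
nonzero element of `H¹_Lie(𝔥_{p,q}; 𝔥_{p,q})`. -/
theorem Imap_cocycle_not_coboundary (p q : ℕ) (hn : 4 ≤ p + q) :
    (∀ x y : Hpair (p + q), x.1 ∈ soSet p q → y.1 ∈ soSet p q →
      Imap (hBracket x y) = hBracket x (Imap y) - hBracket y (Imap x)) ∧
    ¬ (∃ z : Hpair (p + q), z.1 ∈ soSet p q ∧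
        ∀ x : Hpair (p + q), x.1 ∈ soSet p q → Imap x = hBracket z x) := by
  constructor
  · intro x y hx hy
    simp only [Imap, hBracket, Function.prod, LinearMap.prod_apply, LinearMap.zero_apply,
      Pi.zero_apply, LinearMap.snd_apply, Prod.mk_sub_mk, Prod.mk.injEq, Matrix.zero_mulVec,
      Matrix.mul_zero, Matrix.zero_mul, sub_zero, zero_sub]
    constructor
    · trivial
    · funext k; simp; ring
  · rintro ⟨z, hz, hzz⟩
    set i : Fin (p + q) := ⟨0, by omega⟩ with hi
    have hdd : (ddH i : Hpair (p + q)).1 ∈ soSet p q := by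
      simp [ddH, soSet]
    have h := hzz (ddH i) hdd
    have h2 := congrFun (congrArg Prod.snd h) i
    simp only [Imap, hBracket, ddH, Function.prod, LinearMap.prod_apply, LinearMap.snd_apply,
      Matrix.zero_mulVec, zero_sub, Pi.neg_apply, Pi.sub_apply] at h2
    have hmv : z.1.mulVec (Pi.single i (1 : ℝ)) i = z.1 i i := by
      simp [Matrix.mulVec, dotProduct, Pi.single_apply]
    rw [Pi.single_eq_same, hmv] at h2
    -- h2 : 1 = - z.1 i i
    have hd := congrFun (congrFun hz i) i
    simp only [Jmat, Matrix.mul_diagonal, Matrix.diagonal_mul, Matrix.transpose_apply,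
      Pi.neg_apply, Matrix.neg_apply] at hd
    have hz1 : z.1 i i = -1 := by linarith
    rw [hz1] at hd
    by_cases hc : (i : ℕ) < p <;> simp [hc] at hd <;> linarith
end
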